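/- Proposition (reduction of logical failure to basis bad events under the covering condition): let B be a nonempty finite index set, and for each i ∈ B let v_i : Fin n → ZMod 2 be a vector with support L_i := {q : v_i q ≠ 0}, together with a real load o_i ≥ 0. For a nonempty S ⊆ B write M_S for the support of ∑_{i∈S} v_i. Assume the covering condition: for every nonempty S ⊆ B, ∑_{i∈S}(|L_i|/2 − o_i) ≤ |M_S|/2. Then for every finite subset E of Fin n: if there exists a nonempty S ⊆ B with ∑_{i∈S} v_i ≠ 0 and 2·|E ∩ M_S| ≥ |M_S|, then there exists i ∈ B with |E ∩ L_i| ≥ |L_i|/2 − o_i. -/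

import Mathlib

/-- The support of a vector `w : Fin n → ZMod 2`, as a `Finset`. -/
def zsupport {n : ℕ} (w : Fin n → ZMod 2) : Finset (Fin n) :=
  Finset.univ.filter fun q => w q ≠ 0

/-- Reduction of logical failure to basis bad events under the covering condition:
if for every nonempty `S ⊆ B` the shifted thresholds satisfy
`∑_{i∈S}(|L i|/2 − o i) ≤ |M_S|/2` (where `M_S` is the support of `∑_{i∈S} v i`),
then any error `E` covering at least half of some nonzero `M_S` must cover at least
`|L i|/2 − o i` of some basis support `L i`. -/
theorem covering_condition_reduction {n : ℕ} {ι : Type*} [DecidableEq ι]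
    (B : Finset ι) (hB : B.Nonempty)
    (v : ι → Fin n → ZMod 2) (o : ι → ℝ) (ho : ∀ i ∈ B, 0 ≤ o i)
    (hcov : ∀ S ⊆ B, S.Nonempty →
      ∑ i ∈ S, (((zsupport (v i)).card : ℝ) / 2 - o i)
        ≤ ((zsupport (∑ i ∈ S, v i)).card : ℝ) / 2)
    (E : Finset (Fin n))
    (hfail : ∃ S ⊆ B, S.Nonempty ∧ (∑ i ∈ S, v i) ≠ 0 ∧
      (zsupport (∑ i ∈ S, v i)).card ≤ 2 * (E ∩ zsupport (∑ i ∈ S, v i)).card) :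
    ∃ i ∈ B, ((zsupport (v i)).card : ℝ) / 2 - o i ≤ ((E ∩ zsupport (v i)).card : ℝ) := by
  by_contra hcon
  push_neg at hcon
  obtain ⟨S, hSB, hSne, hne, hcard⟩ := hfail
  have hsub : E ∩ zsupport (∑ i ∈ S, v i) ⊆ S.biUnion (fun i => E ∩ zsupport (v i)) := by
    intro q hq
    simp only [Finset.mem_inter, zsupport, Finset.mem_filter, Finset.mem_univ, true_and,
      Finset.mem_biUnion] at hq ⊢
    obtain ⟨hqE, hqM⟩ := hq
    rw [Finset.sum_apply] at hqM
    obtain ⟨i, hi, hvi⟩ : ∃ i ∈ S, v i q ≠ 0 := by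
      by_contra hall
      push_neg at hall
      exact hqM (Finset.sum_eq_zero hall)
    exact ⟨i, hi, hqE, hvi⟩
  have h4 : ((E ∩ zsupport (∑ i ∈ S, v i)).card : ℝ)
      ≤ ∑ i ∈ S, ((E ∩ zsupport (v i)).card : ℝ) := by
    have := (Finset.card_le_card hsub).trans (Finset.card_biUnion_le)
    exact_mod_cast this
  have h1 : ∑ i ∈ S, ((E ∩ zsupport (v i)).card : ℝ)
      < ∑ i ∈ S, (((zsupport (v i)).card : ℝ) / 2 - o i) :=
    Finset.sum_lt_sum_of_nonempty hSne (fun i hi => hcon i (hSB hi))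
  have h2 := hcov S hSB hSne
  have h3 : ((zsupport (∑ i ∈ S, v i)).card : ℝ) / 2
      ≤ ((E ∩ zsupport (∑ i ∈ S, v i)).card : ℝ) := by
    have : ((zsupport (∑ i ∈ S, v i)).card : ℝ) ≤ 2 * (E ∩ zsupport (∑ i ∈ S, v i)).card := by
      exact_mod_cast hcard
    linarith
  linarith
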